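/- Let ε, k_x, ν > 0 and k_y ≠ 0 be real, and for real η define R_±(iη) = i(k_x/k_y)η − i(k_x/(ε k_y²))·(1 ± √(1 − (2εk_y/k_x²)η + 2iν ε k_y²/k_x²)), with √ the principal square root. Then Re(R_+(iη)) > 0, Re(R_−(iη)) < 0, and Re(R_+(iη)) = −Re(R_−(iη)). -/

import Mathlib

open Complex

lemma sqrt_im_pos_aux {z : ℂ} (hz : 0 < z.im) : 0 < (z ^ ((1:ℂ)/2)).im := by
  have hz0 : z ≠ 0 := fun h => by simp [h] at hz
  rw [Complex.cpow_def_of_ne_zero hz0, Complex.exp_im]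
  have him : (Complex.log z * (1/2 : ℂ)).im = z.arg / 2 := by
    simp [Complex.mul_im, Complex.log_im]
    ring
  rw [him]
  refine mul_pos (Real.exp_pos _) (Real.sin_pos_of_pos_of_lt_pi ?_ ?_)
  · have harg : 0 < z.arg := by
      rw [Complex.arg_of_im_pos hz]
      refine Real.arccos_pos.2 ?_
      have h1 : |z.re| < ‖z‖ := Complex.abs_re_lt_norm.2 (ne_of_gt hz)
      have h2 : (0:ℝ) < ‖z‖ := norm_pos_iff.mpr hz0
      rw [div_lt_one h2]
      exact lt_of_le_of_lt (le_abs_self _) h1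
    linarith
  · have := Complex.arg_le_pi z
    have := Real.pi_pos
    linarith

theorem stmt_4 (ε kx ky ν : ℝ) (hε : 0 < ε) (hkx : 0 < kx) (hky : ky ≠ 0) (hν : 0 < ν)
    (η : ℝ)
    (Rplus Rminus : ℂ)
    (hp : Rplus = I * (kx / ky : ℝ) * (η : ℂ) - I * ((kx / (ε * ky ^ 2) : ℝ) : ℂ) *
      (1 + ((1 : ℂ) - ((2 * ε * ky / kx ^ 2 : ℝ) : ℂ) * (η : ℂ)
        + 2 * (ν : ℂ) * (ε : ℂ) * (ky : ℂ) ^ 2 / (kx : ℂ) ^ 2 * I) ^ ((1 : ℂ) / 2)))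
    (hm : Rminus = I * (kx / ky : ℝ) * (η : ℂ) - I * ((kx / (ε * ky ^ 2) : ℝ) : ℂ) *
      (1 - ((1 : ℂ) - ((2 * ε * ky / kx ^ 2 : ℝ) : ℂ) * (η : ℂ)
        + 2 * (ν : ℂ) * (ε : ℂ) * (ky : ℂ) ^ 2 / (kx : ℂ) ^ 2 * I) ^ ((1 : ℂ) / 2))) :
    0 < Rplus.re ∧ Rminus.re < 0 ∧ Rplus.re = -Rminus.re := by
  set w : ℂ := (1 : ℂ) - ((2 * ε * ky / kx ^ 2 : ℝ) : ℂ) * (η : ℂ)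
        + 2 * (ν : ℂ) * (ε : ℂ) * (ky : ℂ) ^ 2 / (kx : ℂ) ^ 2 * I with hw
  set s : ℂ := w ^ ((1:ℂ)/2) with hsdef
  have hwim : 0 < w.im := by
    have h1 : w = ((1 - 2 * ε * ky / kx ^ 2 * η : ℝ) : ℂ) + ((2 * ν * ε * ky ^ 2 / kx ^ 2 : ℝ) : ℂ) * I := by
      rw [hw]; push_cast; ring
    rw [h1]
    simp only [Complex.add_im, Complex.mul_im, Complex.ofReal_re, Complex.ofReal_im,
      Complex.I_im, Complex.I_re]
    have : (0:ℝ) < 2 * ν * ε * ky ^ 2 / kx ^ 2 := by positivity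
    linarith
  have hs : 0 < s.im := sqrt_im_pos_aux hwim
  have hc : 0 < kx / (ε * ky ^ 2) := by positivity
  have hpre : Rplus.re = kx / (ε * ky ^ 2) * s.im := by
    rw [hp]
    simp only [Complex.sub_re, Complex.mul_re, Complex.mul_im, Complex.add_re, Complex.add_im,
      Complex.one_re, Complex.one_im, Complex.I_re, Complex.I_im, Complex.ofReal_re,
      Complex.ofReal_im]
    ring
  have hmre : Rminus.re = -(kx / (ε * ky ^ 2) * s.im) := by
    rw [hm]
    simp only [Complex.sub_re, Complex.mul_re, Complex.mul_im, Complex.sub_im, Complex.add_re,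
      Complex.one_re, Complex.one_im, Complex.I_re, Complex.I_im, Complex.ofReal_re,
      Complex.ofReal_im]
    ring
  refine ⟨?_, ?_, ?_⟩
  · rw [hpre]; exact mul_pos hc hs
  · rw [hmre]; simpa using mul_pos hc hs
  · rw [hpre, hmre]; ring
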